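/- For p ∈ (1, ∞), the function b(q) := q^p · ( (1/q²)E_{1,p}(q) + (1 - 1/q²)K_{1,p}(q) ) satisfies, for all q ∈ (0, 1), b'(q) = (p-1)q^{p-1}K_{1,p}(q) + (p-1)(1 - 2/p)q^{p-3}(E_{1,p}(q) - K_{1,p}(q)) > 0; in particular b is strictly increasing on (0, 1). -/

import Mathlib

open Real

/-- The complete `p`-elliptic integral of the first kind. -/
noncomputable def K1 (p q : ℝ) : ℝ :=
  ∫ z in (0:ℝ)..1, (1 - q ^ 2 * z ^ 2) ^ (-(1/2) : ℝ) * (1 - z ^ 2) ^ (-(1 / p))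

/-- The complete `p`-elliptic integral of the second kind. -/
noncomputable def E1 (p q : ℝ) : ℝ :=
  ∫ z in (0:ℝ)..1, (1 - q ^ 2 * z ^ 2) ^ ((1/2) : ℝ) * (1 - z ^ 2) ^ (-(1 / p))

/-- The function `b`. -/
noncomputable def bfun (p q : ℝ) : ℝ :=
  q ^ p * ((1 / q ^ 2) * E1 p q + (1 - 1 / q ^ 2) * K1 p q)


open MeasureTheory intervalIntegral Set

noncomputable def Hq (p q : ℝ) : ℝ :=
  ∫ z in (0:ℝ)..1, z ^ 2 * (1 - q ^ 2 * z ^ 2) ^ (-(1/2) : ℝ) * (1 - z ^ 2) ^ (-(1 / p))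

noncomputable def Fq (p q : ℝ) : ℝ :=
  ∫ z in (0:ℝ)..1, (1 - q ^ 2 * z ^ 2) ^ (-(1/2) : ℝ) * (1 - z ^ 2) ^ (1 - 1 / p)

noncomputable def Gq (p q : ℝ) : ℝ :=
  ∫ z in (0:ℝ)..1, z ^ 2 * (1 - q ^ 2 * z ^ 2) ^ (-(3/2) : ℝ) * (1 - z ^ 2) ^ (1 - 1 / p)

lemma weighted_integrable {p : ℝ} (hp : 1 < p) {w : ℝ → ℝ} (hw : Measurable w) {C : ℝ}
    (hC : ∀ z ∈ Ioc (0:ℝ) 1, |w z| ≤ C) :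
    IntervalIntegrable (fun z => w z * (1 - z ^ 2) ^ (-(1 / p))) volume 0 1 := by
  have hp0 : 0 < p := lt_trans one_pos hp
  have hexp : (-1:ℝ) < -(1/p) := by
    have : 1/p < 1 := by rw [div_lt_one hp0]; linarith
    linarith
  have hg : IntervalIntegrable (fun z : ℝ => C * (1 - z) ^ (-(1/p))) volume 0 1 := by
    have h1 : IntervalIntegrable (fun x : ℝ => x ^ (-(1/p))) volume 1 0 :=
      intervalIntegrable_rpow' hexp
    have h2 := h1.comp_sub_left 1
    simp only [sub_self, sub_zero] at h2
    exact h2.const_mul C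
  refine hg.mono_fun ((hw.mul ((measurable_const.sub (measurable_id.pow_const 2)).pow
    measurable_const)).aestronglyMeasurable) ?_
  rw [uIoc_of_le (by norm_num : (0:ℝ) ≤ 1)]
  refine (ae_restrict_mem measurableSet_Ioc).mono (fun z hz => ?_)
  have hz0 : 0 < z := hz.1
  have hz1 : z ≤ 1 := hz.2
  have hC0 : 0 ≤ C := (abs_nonneg _).trans (hC z hz)
  have hb0 : (0:ℝ) ≤ 1 - z ^ 2 := by nlinarith
  have hb0' : (0:ℝ) ≤ 1 - z := by linarith
  have h1p : (0:ℝ) < 1/p := by positivity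
  have hbb : (1 - z ^ 2) ^ (-(1/p)) ≤ (1 - z) ^ (-(1/p)) := by
    rcases eq_or_lt_of_le hz1 with h | h
    · subst h; simp
    · exact Real.rpow_le_rpow_of_nonpos (by linarith) (by nlinarith) (by linarith)
  simp only [Real.norm_eq_abs, abs_mul]
  rw [abs_of_nonneg (Real.rpow_nonneg hb0 _), abs_of_nonneg (Real.rpow_nonneg hb0' _),
    abs_of_nonneg hC0]
  exact mul_le_mul (hC z hz) hbb (Real.rpow_nonneg hb0 _) hC0

lemma measK (q : ℝ) : Measurable fun z : ℝ => (1 - q ^ 2 * z ^ 2) ^ (-(1/2) : ℝ) :=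
  (measurable_const.sub ((measurable_id.pow_const 2).const_mul _)).pow measurable_const

lemma intK {p q : ℝ} (hp : 1 < p) (hq : q ∈ Ioo (0:ℝ) 1) :
    IntervalIntegrable
      (fun z => (1 - q ^ 2 * z ^ 2) ^ (-(1/2) : ℝ) * (1 - z ^ 2) ^ (-(1 / p))) volume 0 1 := by
  refine weighted_integrable hp (measK q) (C := (1 - q ^ 2) ^ (-(1/2) : ℝ)) (fun z hz => ?_)
  have h1 : (0:ℝ) < 1 - q ^ 2 := by nlinarith [hq.1, hq.2]
  have hz2 : z ^ 2 ≤ 1 := by nlinarith [hz.1, hz.2]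
  have h2 : 1 - q ^ 2 ≤ 1 - q ^ 2 * z ^ 2 := by
    nlinarith [mul_le_mul_of_nonneg_left hz2 (sq_nonneg q)]
  rw [abs_of_nonneg (Real.rpow_nonneg (by linarith) _)]
  exact Real.rpow_le_rpow_of_nonpos h1 h2 (by norm_num)

lemma intE {p q : ℝ} (hp : 1 < p) (hq : q ∈ Ioo (0:ℝ) 1) :
    IntervalIntegrable
      (fun z => (1 - q ^ 2 * z ^ 2) ^ ((1/2) : ℝ) * (1 - z ^ 2) ^ (-(1 / p))) volume 0 1 := by
  refine weighted_integrable hp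
    ((measurable_const.sub ((measurable_id.pow_const 2).const_mul _)).pow measurable_const)
    (C := 1) (fun z hz => ?_)
  have hz2 : z ^ 2 ≤ 1 := by nlinarith [hz.1, hz.2]
  have h2 : 1 - q ^ 2 * z ^ 2 ≤ 1 := by nlinarith [sq_nonneg q, sq_nonneg z, sq_nonneg (q*z)]
  have h1 : (0:ℝ) ≤ 1 - q ^ 2 * z ^ 2 := by
    nlinarith [mul_le_mul_of_nonneg_left hz2 (sq_nonneg q), hq.1, hq.2]
  rw [abs_of_nonneg (Real.rpow_nonneg h1 _)]
  exact Real.rpow_le_one h1 h2 (by norm_num)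

lemma intH {p q : ℝ} (hp : 1 < p) (hq : q ∈ Ioo (0:ℝ) 1) :
    IntervalIntegrable
      (fun z => z ^ 2 * (1 - q ^ 2 * z ^ 2) ^ (-(1/2) : ℝ) * (1 - z ^ 2) ^ (-(1 / p)))
      volume 0 1 := by
  refine weighted_integrable hp ((measurable_id.pow_const 2).mul (measK q))
    (C := (1 - q ^ 2) ^ (-(1/2) : ℝ)) (fun z hz => ?_)
  have h1 : (0:ℝ) < 1 - q ^ 2 := by nlinarith [hq.1, hq.2]
  have hz2 : z ^ 2 ≤ 1 := by nlinarith [hz.1, hz.2]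
  have h2 : 1 - q ^ 2 ≤ 1 - q ^ 2 * z ^ 2 := by
    nlinarith [mul_le_mul_of_nonneg_left hz2 (sq_nonneg q)]
  have h3 : (0:ℝ) ≤ (1 - q ^ 2 * z ^ 2) ^ (-(1/2) : ℝ) := Real.rpow_nonneg (by linarith) _
  rw [abs_mul, abs_of_nonneg h3, abs_of_nonneg (sq_nonneg z)]
  calc z ^ 2 * (1 - q ^ 2 * z ^ 2) ^ (-(1/2) : ℝ) ≤ 1 * (1 - q ^ 2 * z ^ 2) ^ (-(1/2) : ℝ) := by
        apply mul_le_mul_of_nonneg_right (by nlinarith [hz.1, hz.2]) h3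
    _ = (1 - q ^ 2 * z ^ 2) ^ (-(1/2) : ℝ) := one_mul _
    _ ≤ (1 - q ^ 2) ^ (-(1/2) : ℝ) := Real.rpow_le_rpow_of_nonpos h1 h2 (by norm_num)

lemma contA {q : ℝ} (hq : q ∈ Ioo (0:ℝ) 1) (e : ℝ) :
    ContinuousOn (fun z : ℝ => (1 - q ^ 2 * z ^ 2) ^ e) (Icc 0 1) := by
  refine ContinuousOn.rpow_const (by fun_prop) (fun z hz => Or.inl ?_)
  have hz2 : z ^ 2 ≤ 1 := by nlinarith [hz.1, hz.2]
  have : (0:ℝ) < 1 - q ^ 2 * z ^ 2 := by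
    nlinarith [mul_le_mul_of_nonneg_left hz2 (sq_nonneg q), hq.1, hq.2]
  exact ne_of_gt this

lemma contB {p : ℝ} (hp : 1 < p) :
    ContinuousOn (fun z : ℝ => (1 - z ^ 2) ^ (1 - 1 / p)) (Icc 0 1) := by
  refine ContinuousOn.rpow_const (by fun_prop) (fun z hz => Or.inr ?_)
  have : 1/p < 1 := by rw [div_lt_one (by linarith)]; linarith
  linarith

lemma contFint {p q : ℝ} (hp : 1 < p) (hq : q ∈ Ioo (0:ℝ) 1) :
    ContinuousOn
      (fun z : ℝ => (1 - q ^ 2 * z ^ 2) ^ (-(1/2) : ℝ) * (1 - z ^ 2) ^ (1 - 1 / p)) (Icc 0 1) :=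
  (contA hq _).mul (contB hp)

lemma contGint {p q : ℝ} (hp : 1 < p) (hq : q ∈ Ioo (0:ℝ) 1) :
    ContinuousOn
      (fun z : ℝ => z ^ 2 * (1 - q ^ 2 * z ^ 2) ^ (-(3/2) : ℝ) * (1 - z ^ 2) ^ (1 - 1 / p))
      (Icc 0 1) :=
  (((continuous_pow 2).continuousOn).mul (contA hq _)).mul (contB hp)

lemma hApos {q z : ℝ} (hq : q ∈ Ioo (0:ℝ) 1) (hz : z ∈ Icc (0:ℝ) 1) :
    (0:ℝ) < 1 - q ^ 2 * z ^ 2 := by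
  have hz2 : z ^ 2 ≤ 1 := by nlinarith [hz.1, hz.2]
  nlinarith [mul_le_mul_of_nonneg_left hz2 (sq_nonneg q), hq.1, hq.2]

lemma hc_ne {p : ℝ} (hp : 1 < p) : (1 - 1/p : ℝ) ≠ 0 := by
  have : 1/p < 1 := by rw [div_lt_one (by linarith)]; linarith
  linarith

lemma hc'_ne {p : ℝ} (hp : 1 < p) : (-(1/p) : ℝ) ≠ 0 := by
  have : (0:ℝ) < 1/p := by positivity
  linarith

lemma bfun_eq {p q : ℝ} (hp : 1 < p) (hq : q ∈ Ioo (0:ℝ) 1) :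
    bfun p q = q ^ p * Fq p q := by
  obtain ⟨hq0, hq1⟩ := hq
  rw [bfun]
  congr 1
  rw [E1, K1, Fq, ← intervalIntegral.integral_const_mul, ← intervalIntegral.integral_const_mul,
    ← integral_add ((intE hp ⟨hq0, hq1⟩).const_mul _) ((intK hp ⟨hq0, hq1⟩).const_mul _)]
  refine integral_congr (fun z hz => ?_)
  rw [uIcc_of_le (by norm_num : (0:ℝ) ≤ 1)] at hz
  rcases eq_or_lt_of_le hz.2 with h | h
  · subst h
    rw [show (1:ℝ) - 1^2 = 0 by norm_num, Real.zero_rpow (hc'_ne hp), Real.zero_rpow (hc_ne hp)]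
    ring
  · have hA : (0:ℝ) < 1 - q ^ 2 * z ^ 2 := hApos ⟨hq0, hq1⟩ hz
    have hB : (0:ℝ) < 1 - z ^ 2 := by nlinarith [hz.1]
    have e1 : (1 - q ^ 2 * z ^ 2) ^ ((1/2) : ℝ)
        = (1 - q ^ 2 * z ^ 2) * (1 - q ^ 2 * z ^ 2) ^ (-(1/2) : ℝ) := by
      have h := (Real.rpow_add hA 1 (-(1/2))).symm
      norm_num at h
      exact h.symm
    have e2 : (1 - z ^ 2) ^ (1 - 1/p) = (1 - z ^ 2) * (1 - z ^ 2) ^ (-(1 / p)) := by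
      rw [show (1 - 1/p : ℝ) = 1 + -(1/p) by ring, Real.rpow_add hB, Real.rpow_one]
    simp only [e1, e2]
    have hq2 : q ^ 2 ≠ 0 := by positivity
    field_simp
    ring

lemma F_eq {p q : ℝ} (hp : 1 < p) (hq : q ∈ Ioo (0:ℝ) 1) :
    Fq p q = K1 p q - Hq p q := by
  rw [K1, Hq, Fq, ← integral_sub (intK hp hq) (intH hp hq)]
  refine integral_congr (fun z hz => ?_)
  rw [uIcc_of_le (by norm_num : (0:ℝ) ≤ 1)] at hz
  rcases eq_or_lt_of_le hz.2 with h | h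
  · subst h
    rw [show (1:ℝ) - 1^2 = 0 by norm_num, Real.zero_rpow (hc'_ne hp), Real.zero_rpow (hc_ne hp)]
    ring
  · have hB : (0:ℝ) < 1 - z ^ 2 := by nlinarith [hz.1]
    have e2 : (1 - z ^ 2) ^ (1 - 1/p) = (1 - z ^ 2) * (1 - z ^ 2) ^ (-(1 / p)) := by
      rw [show (1 - 1/p : ℝ) = 1 + -(1/p) by ring, Real.rpow_add hB, Real.rpow_one]
    simp only [e2]
    ring

lemma EK_eq {p q : ℝ} (hp : 1 < p) (hq : q ∈ Ioo (0:ℝ) 1) :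
    E1 p q - K1 p q = -(q ^ 2) * Hq p q := by
  rw [E1, K1, Hq, ← integral_sub (intE hp hq) (intK hp hq), ← intervalIntegral.integral_const_mul]
  refine integral_congr (fun z hz => ?_)
  rw [uIcc_of_le (by norm_num : (0:ℝ) ≤ 1)] at hz
  have hA : (0:ℝ) < 1 - q ^ 2 * z ^ 2 := hApos hq hz
  have e1 : (1 - q ^ 2 * z ^ 2) ^ ((1/2) : ℝ)
      = (1 - q ^ 2 * z ^ 2) * (1 - q ^ 2 * z ^ 2) ^ (-(1/2) : ℝ) := by
    have h := (Real.rpow_add hA 1 (-(1/2))).symm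
    norm_num at h
    exact h.symm
  simp only [e1]
  ring

lemma uIcc01 : uIcc (0:ℝ) 1 = Icc 0 1 := uIcc_of_le zero_le_one

lemma intF {p q : ℝ} (hp : 1 < p) (hq : q ∈ Ioo (0:ℝ) 1) :
    IntervalIntegrable
      (fun z => (1 - q ^ 2 * z ^ 2) ^ (-(1/2) : ℝ) * (1 - z ^ 2) ^ (1 - 1 / p)) volume 0 1 := by
  have h := contFint hp hq
  rw [← uIcc01] at h
  exact h.intervalIntegrable

lemma intG {p q : ℝ} (hp : 1 < p) (hq : q ∈ Ioo (0:ℝ) 1) :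
    IntervalIntegrable
      (fun z => z ^ 2 * (1 - q ^ 2 * z ^ 2) ^ (-(3/2) : ℝ) * (1 - z ^ 2) ^ (1 - 1 / p))
      volume 0 1 := by
  have h := contGint hp hq
  rw [← uIcc01] at h
  exact h.intervalIntegrable

lemma ibp {p q : ℝ} (hp : 1 < p) (hq : q ∈ Ioo (0:ℝ) 1) :
    Fq p q + q ^ 2 * Gq p q - 2 * (1 - 1/p) * Hq p q = 0 := by
  set f1 : ℝ → ℝ := fun z => (1 - q ^ 2 * z ^ 2) ^ (-(1/2) : ℝ) * (1 - z ^ 2) ^ (1 - 1 / p)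
    with hf1
  set f2 : ℝ → ℝ := fun z => z ^ 2 * (1 - q ^ 2 * z ^ 2) ^ (-(3/2) : ℝ) * (1 - z ^ 2) ^ (1 - 1 / p)
    with hf2
  set f3 : ℝ → ℝ := fun z => z ^ 2 * (1 - q ^ 2 * z ^ 2) ^ (-(1/2) : ℝ) * (1 - z ^ 2) ^ (-(1 / p))
    with hf3
  have hderiv : ∀ z ∈ Ioo (0:ℝ) 1,
      HasDerivAt (fun z => z * ((1 - q ^ 2 * z ^ 2) ^ (-(1/2) : ℝ) * (1 - z ^ 2) ^ (1 - 1 / p)))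
        (f1 z + q ^ 2 * f2 z - 2 * (1 - 1/p) * f3 z) z := by
    intro z hz
    have hA : (0:ℝ) < 1 - q ^ 2 * z ^ 2 := hApos hq ⟨hz.1.le, hz.2.le⟩
    have hB : (0:ℝ) < 1 - z ^ 2 := by nlinarith [hz.1, hz.2]
    have h1 : HasDerivAt (fun z : ℝ => 1 - q ^ 2 * z ^ 2) (-(q ^ 2 * (2 * z ^ 1))) z := by
      simpa using ((hasDerivAt_pow 2 z).const_mul (q ^ 2)).const_sub 1
    have h2 := h1.rpow_const (p := (-(1/2) : ℝ)) (Or.inl hA.ne')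
    have h3 : HasDerivAt (fun z : ℝ => 1 - z ^ 2) (-(2 * z ^ 1)) z := by
      simpa using (hasDerivAt_pow 2 z).const_sub 1
    have h4 := h3.rpow_const (p := (1 - 1/p : ℝ)) (Or.inl hB.ne')
    have h5 := (hasDerivAt_id z).mul (h2.mul h4)
    convert h5 using 1
    · rfl
    · rfl
    · rfl
    rw [hf1, hf2, hf3]
    simp only []
    rw [show ((-(3/2)) : ℝ) = -(1/2) - 1 by norm_num, show (-(1/p) : ℝ) = (1 - 1/p) - 1 by ring]
    simp only [id_eq, Pi.mul_apply]
    ring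
  have hcont : ContinuousOn
      (fun z : ℝ => z * ((1 - q ^ 2 * z ^ 2) ^ (-(1/2) : ℝ) * (1 - z ^ 2) ^ (1 - 1 / p)))
      (Icc 0 1) := continuousOn_id.mul ((contA hq _).mul (contB hp))
  have hint : IntervalIntegrable (fun z => f1 z + q ^ 2 * f2 z - 2 * (1 - 1/p) * f3 z)
      volume 0 1 :=
    ((intF hp hq).add ((intG hp hq).const_mul _)).sub ((intH hp hq).const_mul _)
  have heval := integral_eq_sub_of_hasDerivAt_of_le zero_le_one hcont hderiv hint
  have hzero : (fun z : ℝ => z * ((1 - q ^ 2 * z ^ 2) ^ (-(1/2) : ℝ) * (1 - z ^ 2) ^ (1 - 1 / p))) 1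
      - (fun z : ℝ => z * ((1 - q ^ 2 * z ^ 2) ^ (-(1/2) : ℝ) * (1 - z ^ 2) ^ (1 - 1 / p))) 0
      = 0 := by
    simp only []
    rw [show (1:ℝ) - 1^2 = 0 by norm_num, Real.zero_rpow (hc_ne hp)]
    ring
  rw [hzero] at heval
  rw [Fq, Gq, Hq, ← intervalIntegral.integral_const_mul, ← intervalIntegral.integral_const_mul,
    ← integral_add (intF hp hq) ((intG hp hq).const_mul _),
    ← integral_sub (((intF hp hq).add ((intG hp hq).const_mul _))) ((intH hp hq).const_mul _)]
  exact heval

lemma hasDerivAt_Fq {p q : ℝ} (hp : 1 < p) (hq : q ∈ Ioo (0:ℝ) 1) :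
    HasDerivAt (fun x => Fq p x) (q * Gq p q) q := by
  obtain ⟨hq0, hq1⟩ := hq
  set r : ℝ := (1 + q) / 2 with hr
  have hr1 : r < 1 := by rw [hr]; linarith
  have hqr : q < r := by rw [hr]; linarith
  have hr0 : 0 < r := by rw [hr]; linarith
  set ε : ℝ := min q ((1 - q) / 2) with he
  have hε : 0 < ε := lt_min hq0 (by linarith)
  have hball : Metric.ball q ε ⊆ Ioo 0 r := by
    intro x hx
    rw [Metric.mem_ball, Real.dist_eq, abs_lt] at hx
    constructor
    · have := min_le_left q ((1 - q) / 2)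
      linarith [hx.1]
    · have := min_le_right q ((1 - q) / 2)
      rw [hr]
      linarith [hx.2]
  have hmeas : ∀ x : ℝ, AEStronglyMeasurable
      (fun t : ℝ => (1 - x ^ 2 * t ^ 2) ^ (-(1/2) : ℝ) * (1 - t ^ 2) ^ (1 - 1 / p))
      (volume.restrict (uIoc (0:ℝ) 1)) := by
    intro x
    exact ((measK x).mul
      ((measurable_const.sub (measurable_id.pow_const 2)).pow measurable_const)).aestronglyMeasurable
  have hmeas' : AEStronglyMeasurable
      (fun t : ℝ => q * (t ^ 2 * (1 - q ^ 2 * t ^ 2) ^ (-(3/2) : ℝ) * (1 - t ^ 2) ^ (1 - 1 / p)))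
      (volume.restrict (uIoc (0:ℝ) 1)) := by
    refine Measurable.aestronglyMeasurable ?_
    exact (((measurable_id.pow_const 2).mul
      ((measurable_const.sub ((measurable_id.pow_const 2).const_mul _)).pow
        measurable_const)).mul
      ((measurable_const.sub (measurable_id.pow_const 2)).pow measurable_const)).const_mul q
  have h_bound : ∀ᵐ t ∂(volume : Measure ℝ), t ∈ uIoc (0:ℝ) 1 → ∀ x ∈ Metric.ball q ε,
      ‖x * (t ^ 2 * (1 - x ^ 2 * t ^ 2) ^ (-(3/2) : ℝ) * (1 - t ^ 2) ^ (1 - 1 / p))‖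
        ≤ (1 - r ^ 2) ^ (-(3/2) : ℝ) := by
    refine Filter.Eventually.of_forall (fun t ht x hx => ?_)
    rw [uIoc_of_le (by norm_num : (0:ℝ) ≤ 1)] at ht
    obtain ⟨hx0, hxr⟩ := hball hx
    have ht0 : 0 < t := ht.1
    have ht1 : t ≤ 1 := ht.2
    have ht2 : t ^ 2 ≤ 1 := by nlinarith
    have hrA : (0:ℝ) < 1 - r ^ 2 := by nlinarith
    have hAx : 1 - r ^ 2 ≤ 1 - x ^ 2 * t ^ 2 := by nlinarith [sq_nonneg x, sq_nonneg t]
    have hAx0 : (0:ℝ) < 1 - x ^ 2 * t ^ 2 := lt_of_lt_of_le hrA hAx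
    have hB0 : (0:ℝ) ≤ 1 - t ^ 2 := by linarith
    have hB1 : (1 - t ^ 2) ^ (1 - 1/p) ≤ 1 :=
      Real.rpow_le_one hB0 (by nlinarith [sq_nonneg t]) (by
        have : 1/p < 1 := by rw [div_lt_one (by linarith)]; linarith
        linarith)
    have hA3 : (1 - x ^ 2 * t ^ 2) ^ (-(3/2) : ℝ) ≤ (1 - r ^ 2) ^ (-(3/2) : ℝ) :=
      Real.rpow_le_rpow_of_nonpos hrA hAx (by norm_num)
    have hA30 : (0:ℝ) ≤ (1 - x ^ 2 * t ^ 2) ^ (-(3/2) : ℝ) := Real.rpow_nonneg hAx0.le _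
    have hB10 : (0:ℝ) ≤ (1 - t ^ 2) ^ (1 - 1/p) := Real.rpow_nonneg hB0 _
    have hx1 : x ≤ 1 := by linarith
    have hnn : (0:ℝ) ≤ x * (t ^ 2 * (1 - x ^ 2 * t ^ 2) ^ (-(3/2) : ℝ) * (1 - t ^ 2) ^ (1 - 1/p)) :=
      mul_nonneg hx0.le (mul_nonneg (mul_nonneg (sq_nonneg t) hA30) hB10)
    rw [Real.norm_eq_abs, abs_of_nonneg hnn]
    calc x * (t ^ 2 * (1 - x ^ 2 * t ^ 2) ^ (-(3/2) : ℝ) * (1 - t ^ 2) ^ (1 - 1/p))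
        ≤ 1 * (1 * (1 - r ^ 2) ^ (-(3/2) : ℝ) * 1) := by
          gcongr
      _ = (1 - r ^ 2) ^ (-(3/2) : ℝ) := by ring
  have h_diff : ∀ᵐ t ∂(volume : Measure ℝ), t ∈ uIoc (0:ℝ) 1 → ∀ x ∈ Metric.ball q ε,
      HasDerivAt (fun x => (1 - x ^ 2 * t ^ 2) ^ (-(1/2) : ℝ) * (1 - t ^ 2) ^ (1 - 1 / p))
        (x * (t ^ 2 * (1 - x ^ 2 * t ^ 2) ^ (-(3/2) : ℝ) * (1 - t ^ 2) ^ (1 - 1 / p))) x := by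
    refine Filter.Eventually.of_forall (fun t ht x hx => ?_)
    rw [uIoc_of_le (by norm_num : (0:ℝ) ≤ 1)] at ht
    obtain ⟨hx0, hxr⟩ := hball hx
    have ht2 : t ^ 2 ≤ 1 := by nlinarith [ht.1, ht.2]
    have hAx0 : (0:ℝ) < 1 - x ^ 2 * t ^ 2 := by nlinarith [sq_nonneg x, sq_nonneg t]
    have h1 : HasDerivAt (fun x : ℝ => 1 - x ^ 2 * t ^ 2) (-(2 * x ^ 1 * t ^ 2)) x := by
      simpa using ((hasDerivAt_pow 2 x).mul_const (t ^ 2)).const_sub 1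
    have h2 := h1.rpow_const (p := (-(1/2) : ℝ)) (Or.inl hAx0.ne')
    have h5 := h2.mul_const ((1 - t ^ 2) ^ (1 - 1 / p))
    convert h5 using 1
    · rfl
    · rfl
    rw [show ((-(3/2)) : ℝ) = -(1/2) - 1 by norm_num]
    ring
  have key := intervalIntegral.hasDerivAt_integral_of_dominated_loc_of_deriv_le (Metric.ball_mem_nhds q hε)
    (Filter.Eventually.of_forall hmeas) (intF hp ⟨hq0, hq1⟩)
    (by
      have h := hmeas'
      exact (Measurable.aestronglyMeasurable (by
        exact ((((measurable_id.pow_const 2).mul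
          ((measurable_const.sub ((measurable_id.pow_const 2).const_mul _)).pow
            measurable_const)).mul
          ((measurable_const.sub (measurable_id.pow_const 2)).pow
            measurable_const)).const_mul q)))) h_bound
    (intervalIntegrable_const) h_diff
  have heq : q * Gq p q = ∫ t in (0:ℝ)..1,
      q * (t ^ 2 * (1 - q ^ 2 * t ^ 2) ^ (-(3/2) : ℝ) * (1 - t ^ 2) ^ (1 - 1 / p)) := by
    rw [intervalIntegral.integral_const_mul, Gq]
  rw [heq]
  exact key.2

lemma Fq_pos {p q : ℝ} (hp : 1 < p) (hq : q ∈ Ioo (0:ℝ) 1) : 0 < Fq p q := by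
  rw [Fq]
  refine intervalIntegral_pos_of_pos_on (intF hp hq) (fun z hz => ?_) zero_lt_one
  have hA : (0:ℝ) < 1 - q ^ 2 * z ^ 2 := hApos hq ⟨hz.1.le, hz.2.le⟩
  have hB : (0:ℝ) < 1 - z ^ 2 := by nlinarith [hz.1, hz.2]
  exact mul_pos (Real.rpow_pos_of_pos hA _) (Real.rpow_pos_of_pos hB _)

lemma Gq_nonneg {p q : ℝ} (hp : 1 < p) (hq : q ∈ Ioo (0:ℝ) 1) : 0 ≤ Gq p q := by
  rw [Gq]
  refine intervalIntegral.integral_nonneg zero_le_one (fun u hu => ?_)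
  have hA : (0:ℝ) < 1 - q ^ 2 * u ^ 2 := hApos hq hu
  have hB : (0:ℝ) ≤ 1 - u ^ 2 := by nlinarith [hu.1, hu.2]
  exact mul_nonneg (mul_nonneg (sq_nonneg _) (Real.rpow_nonneg hA.le _)) (Real.rpow_nonneg hB _)

theorem bfun_deriv_pos (p : ℝ) (hp : 1 < p) :
    (∀ q ∈ Set.Ioo (0:ℝ) 1,
      HasDerivAt (bfun p)
        ((p - 1) * q ^ (p - 1) * K1 p q +
          (p - 1) * (1 - 2 / p) * q ^ (p - 3) * (E1 p q - K1 p q)) q ∧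
      0 < (p - 1) * q ^ (p - 1) * K1 p q +
          (p - 1) * (1 - 2 / p) * q ^ (p - 3) * (E1 p q - K1 p q)) ∧
    StrictMonoOn (bfun p) (Set.Ioo (0:ℝ) 1) := by
  have hp0 : (0:ℝ) < p := by linarith
  have main : ∀ q ∈ Set.Ioo (0:ℝ) 1,
      HasDerivAt (bfun p)
        ((p - 1) * q ^ (p - 1) * K1 p q +
          (p - 1) * (1 - 2 / p) * q ^ (p - 3) * (E1 p q - K1 p q)) q ∧
      0 < (p - 1) * q ^ (p - 1) * K1 p q +
          (p - 1) * (1 - 2 / p) * q ^ (p - 3) * (E1 p q - K1 p q) := by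
    intro q hq
    obtain ⟨hq0, hq1⟩ := hq
    have hq2 : (q:ℝ) ^ 2 ≠ 0 := by positivity
    have e4 : q ^ (p - 1) = q ^ (p - 3) * q ^ 2 := by
      have h := Real.rpow_add hq0 (p - 3) 2
      rw [show p - 3 + 2 = p - 1 by ring] at h
      rw [h]
      congr 1
      rw [← Real.rpow_natCast q 2]
      norm_num
    have e3 : q ^ p = q ^ (p - 3) * q ^ 2 * q := by
      have h := Real.rpow_add hq0 (p - 1) 1
      rw [show p - 1 + 1 = p by ring, Real.rpow_one] at h
      rw [h, e4]
    have hFKH := F_eq hp ⟨hq0, hq1⟩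
    have hEK := EK_eq hp ⟨hq0, hq1⟩
    have hibp := ibp hp ⟨hq0, hq1⟩
    have hGval : Gq p q = (2 * (1 - 1/p) * Hq p q - (K1 p q - Hq p q)) / q ^ 2 := by
      rw [eq_div_iff hq2]
      rw [hFKH] at hibp
      linear_combination hibp
    have hval : p * q ^ (p - 1) * Fq p q + q ^ p * (q * Gq p q)
        = (p - 1) * q ^ (p - 1) * K1 p q +
          (p - 1) * (1 - 2 / p) * q ^ (p - 3) * (E1 p q - K1 p q) := by
      rw [hEK, hFKH, hGval, e3, e4]
      field_simp
      ring
    have hd1 : HasDerivAt (fun x : ℝ => x ^ p * Fq p x)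
        (p * q ^ (p - 1) * Fq p q + q ^ p * (q * Gq p q)) q := by
      have h1 : HasDerivAt (fun x : ℝ => x ^ p) (p * q ^ (p - 1)) q :=
        Real.hasDerivAt_rpow_const (Or.inl hq0.ne')
      exact h1.mul (hasDerivAt_Fq hp ⟨hq0, hq1⟩)
    have hfeq : bfun p =ᶠ[nhds q] fun x : ℝ => x ^ p * Fq p x := by
      refine Filter.eventuallyEq_of_mem (isOpen_Ioo.mem_nhds ⟨hq0, hq1⟩) (fun x hx => ?_)
      exact bfun_eq hp hx
    have hd2 : HasDerivAt (bfun p)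
        ((p - 1) * q ^ (p - 1) * K1 p q +
          (p - 1) * (1 - 2 / p) * q ^ (p - 3) * (E1 p q - K1 p q)) q := by
      rw [← hval]
      exact HasDerivAt.congr_of_eventuallyEq hd1 hfeq
    refine ⟨hd2, ?_⟩
    rw [← hval]
    have h1 : 0 < p * q ^ (p - 1) * Fq p q :=
      mul_pos (mul_pos hp0 (Real.rpow_pos_of_pos hq0 _)) (Fq_pos hp ⟨hq0, hq1⟩)
    have h2 : 0 ≤ q ^ p * (q * Gq p q) :=
      mul_nonneg (Real.rpow_nonneg hq0.le _)
        (mul_nonneg hq0.le (Gq_nonneg hp ⟨hq0, hq1⟩))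
    linarith
  refine ⟨main, ?_⟩
  refine strictMonoOn_of_deriv_pos (convex_Ioo 0 1)
    (fun x hx => ((main x hx).1).continuousAt.continuousWithinAt) (fun x hx => ?_)
  rw [interior_Ioo] at hx
  rw [(main x hx).1.deriv]
  exact (main x hx).2
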